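/- Let Y₁,…,Y_k be i.i.d. Laplace random variables with scale b > 0, let q₁,…,q_k ∈ [0,1] be scalars, and let Y = Σᵢ qᵢYᵢ. If 0 < α ≤ kb, then Pr[Y ≥ α] ≤ exp(-α²/(6kb²)). -/

import Mathlib

open MeasureTheory Real BigOperators

open Set
open scoped ENNReal NNReal

/-- The Laplace distribution with scale `b`, given by the density
`(1/(2b)) * exp (-|x|/b)` with respect to Lebesgue measure. -/
noncomputable def laplaceMeasure (b : ℝ) : Measure ℝ :=
  volume.withDensity fun x => ENNReal.ofReal ((1 / (2 * b)) * Real.exp (-|x| / b))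

lemma integral_exp_neg_mul_Ioi {c : ℝ} (hc : 0 < c) :
    ∫ x in Ioi (0:ℝ), Real.exp (-(c * x)) = 1 / c := by
  have h := integral_comp_mul_left_Ioi (fun u => Real.exp (-u)) 0 hc
  simp only [mul_zero, integral_exp_neg_Ioi, neg_zero, Real.exp_zero, smul_eq_mul,
    mul_one] at h
  rw [h, one_div]

lemma integrableOn_Iic_of_neg {f : ℝ → ℝ}
    (hf : IntegrableOn (fun x => f (-x)) (Ioi (0:ℝ))) :
    IntegrableOn f (Iic (0:ℝ)) := by
  have A : MeasurableEmbedding fun x : ℝ => -x :=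
    (Homeomorph.neg ℝ).isClosedEmbedding.measurableEmbedding
  have h1 : (volume : Measure ℝ).restrict (Iic 0)
      = Measure.map (fun x : ℝ => -x) ((volume : Measure ℝ).restrict (Ici 0)) := by
    rw [← Measure.map_neg_eq_self (volume : Measure ℝ)]
    rw [A.restrict_map]
    congr 1
    ext x; simp
  rw [IntegrableOn, h1, A.integrable_map_iff]
  exact (integrableOn_Ici_iff_integrableOn_Ioi).2 hf

lemma laplace_exp (b : ℝ) (hb : 0 < b) (s : ℝ) (hs0 : 0 ≤ s) (hs : s < 1 / b) :
    Integrable (fun x => Real.exp (s * x)) (laplaceMeasure b) ∧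
    ∫ x, Real.exp (s * x) ∂(laplaceMeasure b) = 1 / (1 - b ^ 2 * s ^ 2) := by
  set dens : ℝ → ℝ := fun x => (1 / (2 * b)) * Real.exp (-|x| / b) with hdens
  have hdens_nonneg : ∀ x, 0 ≤ dens x := fun x => by positivity
  have hdens_cont : Continuous dens :=
    continuous_const.mul (((continuous_abs.neg).div_const b).rexp)
  have hmeasd : Measurable fun x => (dens x).toNNReal :=
    hdens_cont.measurable.real_toNNReal
  have hlap : laplaceMeasure b = volume.withDensity fun x => ((dens x).toNNReal : ℝ≥0∞) :=
    rfl
  set F : ℝ → ℝ := fun x => (dens x).toNNReal • Real.exp (s * x) with hF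
  have hFeq : ∀ x, F x = (1 / (2 * b)) * Real.exp (s * x - |x| / b) := by
    intro x
    simp only [hF, NNReal.smul_def, smul_eq_mul, Real.coe_toNNReal _ (hdens_nonneg x), hdens]
    rw [Real.coe_toNNReal _ (hdens_nonneg x), mul_assoc, ← Real.exp_add]
    congr 2
    try ring
  have hcp : 0 < 1 / b - s := by linarith
  have hcm : 0 < 1 / b + s := by positivity
  have hIoi : IntegrableOn F (Ioi (0:ℝ)) := by
    refine IntegrableOn.congr_fun ((exp_neg_integrableOn_Ioi 0 hcp).const_mul (1 / (2 * b)))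
      (fun x hx => ?_) measurableSet_Ioi
    rw [hFeq x, abs_of_pos (mem_Ioi.mp hx)]
    congr 2
    try ring
  have hIic : IntegrableOn F (Iic (0:ℝ)) := by
    apply integrableOn_Iic_of_neg
    refine IntegrableOn.congr_fun ((exp_neg_integrableOn_Ioi 0 hcm).const_mul (1 / (2 * b)))
      (fun x hx => ?_) measurableSet_Ioi
    show _ = F (-x)
    rw [hFeq (-x), abs_of_nonpos (by linarith [mem_Ioi.mp hx] : (-x:ℝ) ≤ 0)]
    congr 2
    try ring
  have hFint : Integrable F volume := by
    rw [← integrableOn_univ, ← Set.Iic_union_Ioi (a := (0:ℝ))]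
    exact hIic.union hIoi
  have hIoiVal : ∫ x in Ioi (0:ℝ), F x = (1 / (2 * b)) * (1 / (1 / b - s)) := by
    have e : ∫ x in Ioi (0:ℝ), F x
        = ∫ x in Ioi (0:ℝ), (1 / (2 * b)) * Real.exp (-((1 / b - s) * x)) := by
      refine setIntegral_congr_fun measurableSet_Ioi (fun x hx => ?_)
      rw [hFeq x, abs_of_pos (mem_Ioi.mp hx)]
      congr 2
      try ring
    rw [e, integral_const_mul, integral_exp_neg_mul_Ioi hcp]
  have hIicVal : ∫ x in Iic (0:ℝ), F x = (1 / (2 * b)) * (1 / (1 / b + s)) := by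
    have h0 : ∫ x in Ioi (0:ℝ), F (-x) = ∫ x in Iic (-(0:ℝ)), F x := integral_comp_neg_Ioi 0 F
    rw [neg_zero] at h0
    rw [← h0]
    have e : ∫ x in Ioi (0:ℝ), F (-x)
        = ∫ x in Ioi (0:ℝ), (1 / (2 * b)) * Real.exp (-((1 / b + s) * x)) := by
      refine setIntegral_congr_fun measurableSet_Ioi (fun x hx => ?_)
      rw [hFeq (-x), abs_of_nonpos (by linarith [mem_Ioi.mp hx] : (-x:ℝ) ≤ 0)]
      congr 2
      try ring
    rw [e, integral_const_mul, integral_exp_neg_mul_Ioi hcm]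
  constructor
  · rw [hlap]
    exact (integrable_withDensity_iff_integrable_smul hmeasd).2 hFint
  · rw [hlap, integral_withDensity_eq_integral_smul hmeasd]
    rw [← intervalIntegral.integral_Iic_add_Ioi hIic hIoi, hIicVal, hIoiVal]
    have hbs : b * s < 1 := by
      have := mul_lt_mul_of_pos_left hs hb
      rwa [mul_one_div, div_self hb.ne'] at this
    have e1 : 1 - b*s ≠ 0 := by nlinarith [mul_nonneg hb.le hs0]
    have e2 : 1 + b*s ≠ 0 := by nlinarith [mul_nonneg hb.le hs0]
    have f1 : (1:ℝ)/b - s = (1 - b*s)/b := by field_simp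
    have f2 : (1:ℝ)/b + s = (1 + b*s)/b := by field_simp
    rw [f1, f2, one_div_div, one_div_div]
    rw [show (1:ℝ) - b^2*s^2 = (1-b*s)*(1+b*s) by ring]
    field_simp
    ring

lemma one_div_one_sub_le_exp {x : ℝ} (h0 : 0 ≤ x) (h1 : x ≤ 1/3) :
    1 / (1 - x) ≤ Real.exp (3/2 * x) := by
  have hx : 0 < 1 - x := by linarith
  have h2 : 1 + 3/2*x ≤ Real.exp (3/2*x) := by
    have := Real.add_one_le_exp (3/2*x); linarith
  have h3 : 1 / (1 - x) ≤ 1 + 3/2*x := by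
    rw [div_le_iff₀ hx]; nlinarith
  linarith

/-- Tail bound for weighted sums of i.i.d. Laplace random variables,
small-deviation regime: if `0 < α ≤ k b` then
`Pr[∑ qᵢ Yᵢ ≥ α] ≤ exp (-α² / (6 k b²))`. -/
theorem laplace_weighted_sum_tail_small
    {Ω : Type*} [MeasureSpace Ω] [IsProbabilityMeasure (volume : Measure Ω)]
    (k : ℕ) (hk : 0 < k) (b : ℝ) (hb : 0 < b)
    (Y : Fin k → Ω → ℝ) (hmeas : ∀ i, Measurable (Y i))
    (hlaw : ∀ i, Measure.map (Y i) (volume : Measure Ω) = laplaceMeasure b)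
    (hindep : ProbabilityTheory.iIndepFun Y (volume : Measure Ω))
    (q : Fin k → ℝ) (hq : ∀ i, q i ∈ Set.Icc (0 : ℝ) 1)
    (α : ℝ) (hα : 0 < α) (hαk : α ≤ k * b) :
    ((volume : Measure Ω) {ω | α ≤ ∑ i, q i * Y i ω}).toReal ≤
      Real.exp (-α ^ 2 / (6 * k * b ^ 2)) := by
  classical
  have hkpos : (0:ℝ) < k := Nat.cast_pos.mpr hk
  set t : ℝ := α / (3 * k * b ^ 2) with ht
  have ht0 : 0 < t := by positivity
  have htb : t * b ≤ 1 / 3 := by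
    rw [ht, div_mul_eq_mul_div, div_le_div_iff₀ (by positivity) (by norm_num)]
    nlinarith
  set X : Fin k → Ω → ℝ := fun i ω => q i * Y i ω with hX
  have hXmeas : ∀ i, Measurable (X i) := fun i => (hmeas i).const_mul _
  have hindepX : ProbabilityTheory.iIndepFun X (volume : Measure Ω) :=
    hindep.comp (fun i x => q i * x) (fun i => measurable_const_mul _)
  -- per-coordinate facts
  have key : ∀ i, Integrable (fun ω => Real.exp (t * X i ω)) (volume : Measure Ω) ∧
      ProbabilityTheory.mgf (X i) (volume : Measure Ω) t ≤ Real.exp (3/2 * (b*t)^2) := by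
    intro i
    set s : ℝ := t * q i with hs
    have hq0 := (hq i).1
    have hq1 := (hq i).2
    have hs0 : 0 ≤ s := mul_nonneg ht0.le hq0
    have hst : s ≤ t := by nlinarith
    have hsb : s * b ≤ 1/3 := by nlinarith
    have hslt : s < 1 / b := by
      rw [lt_div_iff₀ hb]; linarith
    obtain ⟨hint, hval⟩ := laplace_exp b hb s hs0 hslt
    have hcomp : (fun ω => Real.exp (t * X i ω)) = (fun x => Real.exp (s * x)) ∘ Y i := by
      funext ω
      simp only [Function.comp_apply, hX, hs]
      rw [← mul_assoc]
    have hg : AEStronglyMeasurable (fun x => Real.exp (s * x)) (laplaceMeasure b) :=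
      (Real.continuous_exp.comp (continuous_const.mul continuous_id)).aestronglyMeasurable
    have hint' : Integrable (fun ω => Real.exp (t * X i ω)) (volume : Measure Ω) := by
      rw [hcomp]
      apply (integrable_map_measure (by rw [hlaw i]; exact hg) (hmeas i).aemeasurable).mp
      rw [hlaw i]; exact hint
    refine ⟨hint', ?_⟩
    have hmgf : ProbabilityTheory.mgf (X i) (volume : Measure Ω) t
        = 1 / (1 - b ^ 2 * s ^ 2) := by
      rw [ProbabilityTheory.mgf]
      calc ∫ ω, Real.exp (t * X i ω) = ∫ ω, ((fun x => Real.exp (s * x)) ∘ Y i) ω := by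
            rw [hcomp]
        _ = ∫ x, Real.exp (s * x) ∂(Measure.map (Y i) (volume : Measure Ω)) :=
            (integral_map (hmeas i).aemeasurable (by rw [hlaw i]; exact hg)).symm
        _ = 1 / (1 - b ^ 2 * s ^ 2) := by rw [hlaw i, hval]
    rw [hmgf]
    have hx0 : 0 ≤ b ^ 2 * s ^ 2 := by positivity
    have hsb0 : 0 ≤ s * b := mul_nonneg hs0 hb.le
    have hbsbt : b * s ≤ b * t := by nlinarith
    have hsq := mul_self_le_mul_self (by nlinarith : (0:ℝ) ≤ b * s) hbsbt
    have hx1 : b ^ 2 * s ^ 2 ≤ 1/3 := by nlinarith [mul_self_le_mul_self hsb0 hsb]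
    calc 1 / (1 - b ^ 2 * s ^ 2) ≤ Real.exp (3/2 * (b ^ 2 * s ^ 2)) :=
          one_div_one_sub_le_exp hx0 hx1
      _ ≤ Real.exp (3/2 * (b*t)^2) := by
          apply Real.exp_le_exp.mpr
          nlinarith [hsq]
  -- Chernoff
  have hIntSum : Integrable (fun ω => Real.exp (t * (∑ i, X i) ω)) (volume : Measure Ω) :=
    hindepX.integrable_exp_mul_sum hXmeas (fun i _ => (key i).1)
  have hset : {ω | α ≤ ∑ i, q i * Y i ω} = {ω | α ≤ (∑ i, X i) ω} := by
    ext ω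
    simp [Finset.sum_apply, hX]
  rw [hset]
  refine (ProbabilityTheory.measure_ge_le_exp_mul_mgf α ht0.le hIntSum).trans ?_
  rw [hindepX.mgf_sum hXmeas Finset.univ]
  have hprod : (∏ i, ProbabilityTheory.mgf (X i) (volume : Measure Ω) t)
      ≤ Real.exp (3/2 * (b*t)^2) ^ k := by
    calc (∏ i, ProbabilityTheory.mgf (X i) (volume : Measure Ω) t)
        ≤ ∏ _i : Fin k, Real.exp (3/2 * (b*t)^2) :=
          Finset.prod_le_prod (fun i _ => ProbabilityTheory.mgf_nonneg) (fun i _ => (key i).2)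
      _ = Real.exp (3/2 * (b*t)^2) ^ k := by
          rw [Finset.prod_const, Finset.card_univ, Fintype.card_fin]
  calc Real.exp (-t * α) * ∏ i, ProbabilityTheory.mgf (X i) (volume : Measure Ω) t
      ≤ Real.exp (-t * α) * Real.exp (3/2 * (b*t)^2) ^ k := by
        exact mul_le_mul_of_nonneg_left hprod (Real.exp_nonneg _)
    _ = Real.exp (-t * α + k * (3/2 * (b*t)^2)) := by
        rw [← Real.exp_nat_mul, ← Real.exp_add]
    _ = Real.exp (-α ^ 2 / (6 * k * b ^ 2)) := by
        congr 1
        have hk' : (k:ℝ) ≠ 0 := ne_of_gt hkpos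
        rw [ht]
        field_simp
        ring
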